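/- arXiv:1907.00877 — 8 statements merged into one kernel-verified Lean document; each statement's English description precedes it below -/
import Mathlib

section
/- Let M be a type equipped with a binary relation ∈ : M → M → Prop and a unary function V̄ : M → M satisfying Extensionality (∀ x y, (∀ z, z ∈ x ↔ z ∈ y) → x = y), the Defining Axiom for V̄ (∀ x y, y ∈ V̄(x) ↔ ∃ z, z ∈ x ∧ y ⊆ V̄(z)), and full Separation (∀ x : M, ∀ P : M → Prop, ∃ z : M, ∀ w, w ∈ z ↔ (w ∈ x ∧ P w)). Then the relation ∈ on M is well-founded; equivalently, ε-induction holds: for every predicate P : M → Prop, if for all y one has ((∀ z, z ∈ y → P z) → P y), then P y holds for all y. -/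
theorem epsilon_induction_of_H_omega
    {M : Type*} (mem : M → M → Prop) (V : M → M)
    (ext : ∀ x y : M, (∀ z, mem z x ↔ mem z y) → x = y)
    (defV : ∀ x y : M, mem y (V x) ↔ ∃ z, mem z x ∧ ∀ w, mem w y → mem w (V z))
    (sep : ∀ (x : M) (P : M → Prop), ∃ z : M, ∀ w, mem w z ↔ (mem w x ∧ P w)) :
    WellFounded mem ∧
      ∀ P : M → Prop, (∀ y, (∀ z, mem z y → P z) → P y) → ∀ y, P y := by
  classical
  have key : ∀ a b : M, mem a b →
      Cardinal.mk {w // mem w (V a)} < Cardinal.mk {w // mem w (V b)} := by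
    intro a b hab
    have hs : ∀ S : Set {w // mem w (V a)}, ∃ s : M,
        ∀ w, mem w s ↔ (mem w (V a) ∧ ∃ h : mem w (V a), (⟨w, h⟩ : {w // mem w (V a)}) ∈ S) :=
      fun S => sep (V a) _
    choose g hg using hs
    have hmemb : ∀ S, mem (g S) (V b) := by
      intro S
      rw [defV]
      exact ⟨a, hab, fun w hw => ((hg S w).1 hw).1⟩
    have hinj : Function.Injective (fun S : Set {w // mem w (V a)} =>
        (⟨g S, hmemb S⟩ : {w // mem w (V b)})) := by
      intro S₁ S₂ h
      have h' : g S₁ = g S₂ := congrArg Subtype.val h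
      ext ⟨w, hw⟩
      constructor
      · intro hS
        have h1 : mem w (g S₁) := (hg S₁ w).2 ⟨hw, hw, hS⟩
        rw [h'] at h1
        rcases (hg S₂ w).1 h1 with ⟨_, h2, hS2⟩
        exact hS2
      · intro hS
        have h1 : mem w (g S₂) := (hg S₂ w).2 ⟨hw, hw, hS⟩
        rw [← h'] at h1
        rcases (hg S₁ w).1 h1 with ⟨_, h2, hS2⟩
        exact hS2
    calc Cardinal.mk {w // mem w (V a)}
        < 2 ^ Cardinal.mk {w // mem w (V a)} := Cardinal.cantor _
      _ = Cardinal.mk (Set {w // mem w (V a)}) := (Cardinal.mk_set).symm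
      _ ≤ Cardinal.mk {w // mem w (V b)} := Cardinal.mk_le_of_injective hinj
  have wf : WellFounded mem :=
    Subrelation.wf (fun {a b} h => key a b h)
      (InvImage.wf (fun x => Cardinal.mk {w // mem w (V x)}) Cardinal.lt_wf)
  exact ⟨wf, fun P h y => wf.induction y h⟩
end

section
/- Let M be a type equipped with a binary relation ∈ : M → M → Prop and a unary function V̄ : M → M satisfying Extensionality (∀ x y, (∀ z, z ∈ x ↔ z ∈ y) → x = y), the Defining Axiom for V̄ (∀ x y, y ∈ V̄(x) ↔ ∃ z, z ∈ x ∧ y ⊆ V̄(z)), and such that ∈ is well-founded. Then for every x : M one has x ⊆ V̄(x). -/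
theorem subset_Vbar
    {M : Type*} (mem : M → M → Prop) (V : M → M)
    (ext : ∀ x y : M, (∀ z, mem z x ↔ mem z y) → x = y)
    (defV : ∀ x y : M, mem y (V x) ↔ ∃ z, mem z x ∧ ∀ w, mem w y → mem w (V z))
    (wf : WellFounded mem) :
    ∀ x : M, ∀ z, mem z x → mem z (V x) := by
  have key : ∀ z : M, ∀ w, mem w z → mem w (V z) := by
    intro z
    induction z using wf.induction with
    | _ z ih =>
      intro w hw
      exact (defV z w).mpr ⟨w, hw, ih w hw⟩
  intro x z hz
  exact (defV x z).mpr ⟨z, hz, key z⟩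
end

section
/- Let M be a type equipped with a binary relation ∈ : M → M → Prop and a unary function V̄ : M → M satisfying Extensionality (∀ x y, (∀ z, z ∈ x ↔ z ∈ y) → x = y), the Defining Axiom for V̄ (∀ x y, y ∈ V̄(x) ↔ ∃ z, z ∈ x ∧ y ⊆ V̄(z)), and such that ∈ is well-founded. Then for every x : M the element V̄(x) is transitive, i.e. for all y, if y ∈ V̄(x) then y ⊆ V̄(x). -/
theorem Vbar_transitive
    {M : Type*} (mem : M → M → Prop) (V : M → M)
    (ext : ∀ x y : M, (∀ z, mem z x ↔ mem z y) → x = y)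
    (defV : ∀ x y : M, mem y (V x) ↔ ∃ z, mem z x ∧ ∀ w, mem w y → mem w (V z))
    (wf : WellFounded mem) :
    ∀ x : M, ∀ y, mem y (V x) → ∀ z, mem z y → mem z (V x) := by
  intro x
  induction x using wf.induction with
  | _ x ih =>
    intro y hy z hz
    obtain ⟨w, hwx, hyw⟩ := (defV x y).mp hy
    have hzVw : mem z (V w) := hyw z hz
    exact (defV x z).mpr ⟨w, hwx, fun u hu => ih w hwx z hzVw u hu⟩
end

section
/- Let M be a type equipped with a binary relation ∈ : M → M → Prop and a unary function V̄ : M → M satisfying Extensionality (∀ x y, (∀ z, z ∈ x ↔ z ∈ y) → x = y), the Defining Axiom for V̄ (∀ x y, y ∈ V̄(x) ↔ ∃ z, z ∈ x ∧ y ⊆ V̄(z)), and such that ∈ is well-founded. Then for every x : M the element V̄(x) is closed under V̄: for all y, if y ∈ V̄(x) then V̄(y) ∈ V̄(x). -/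
theorem Vbar_closed_under_Vbar
    {M : Type*} (mem : M → M → Prop) (V : M → M)
    (ext : ∀ x y : M, (∀ z, mem z x ↔ mem z y) → x = y)
    (defV : ∀ x y : M, mem y (V x) ↔ ∃ z, mem z x ∧ ∀ w, mem w y → mem w (V z))
    (wf : WellFounded mem) :
    ∀ x : M, ∀ y, mem y (V x) → mem (V y) (V x) := by
  have L : ∀ z : M, ∀ u : M, (∀ w, mem w u → mem w (V z)) →
      ∀ w, mem w (V u) → mem w (V z) := by
    intro z
    induction z using wf.induction with
    | _ z ih =>
      intro u hu w hw
      obtain ⟨b, hb, hab⟩ := (defV u w).mp hw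
      obtain ⟨c, hc, hbc⟩ := (defV z b).mp (hu b hb)
      exact (defV z w).mpr ⟨c, hc, fun a ha => ih c hc b hbc a (hab a ha)⟩
  intro x y hy
  obtain ⟨z, hz, hyz⟩ := (defV x y).mp hy
  exact (defV x (V y)).mpr ⟨z, hz, fun w hw => L z y hyz w hw⟩
end

section
/- Let M be a type equipped with a binary relation ∈ : M → M → Prop and a unary function V̄ : M → M satisfying Extensionality (∀ x y, (∀ z, z ∈ x ↔ z ∈ y) → x = y), the Defining Axiom for V̄ (∀ x y, y ∈ V̄(x) ↔ ∃ z, z ∈ x ∧ y ⊆ V̄(z)), and such that ∈ is well-founded. Then V̄ is idempotent: V̄(V̄(x)) = V̄(x) for every x : M. -/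
theorem Vbar_idempotent
    {M : Type*} (mem : M → M → Prop) (V : M → M)
    (ext : ∀ x y : M, (∀ z, mem z x ↔ mem z y) → x = y)
    (defV : ∀ x y : M, mem y (V x) ↔ ∃ z, mem z x ∧ ∀ w, mem w y → mem w (V z))
    (wf : WellFounded mem) :
    ∀ x : M, V (V x) = V x := by
  -- C : every element of z is in V z
  have C : ∀ z : M, ∀ w, mem w z → mem w (V z) := by
    intro z
    induction z using wf.induction with
    | _ z ih =>
      intro w hw
      exact (defV z w).mpr ⟨w, hw, ih w hw⟩
  -- F : if z ⊆ V u then V z ⊆ V u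
  have F : ∀ z : M, ∀ u, (∀ w, mem w z → mem w (V u)) →
      ∀ a, mem a (V z) → mem a (V u) := by
    intro z
    induction z using wf.induction with
    | _ z ih =>
      intro u hsub a ha
      obtain ⟨v, hv, hav⟩ := (defV z a).mp ha
      obtain ⟨t, ht, hvt⟩ := (defV u v).mp (hsub v hv)
      exact (defV u a).mpr ⟨t, ht, fun w hw => ih v hv t hvt w (hav w hw)⟩
  intro x
  apply ext
  intro y
  constructor
  · intro hy
    obtain ⟨z, hz, hyz⟩ := (defV (V x) y).mp hy
    obtain ⟨u, hu, hzu⟩ := (defV x z).mp hz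
    exact (defV x y).mpr ⟨u, hu, fun w hw => F z u hzu w (hyz w hw)⟩
  · intro hy
    obtain ⟨z, hz, hyz⟩ := (defV x y).mp hy
    exact (defV (V x) y).mpr ⟨z, C x z hz, hyz⟩
end

section
/- Let M be a type equipped with a binary relation ∈ : M → M → Prop and a unary function V̄ : M → M satisfying Extensionality (∀ x y, (∀ z, z ∈ x ↔ z ∈ y) → x = y), the Defining Axiom for V̄ (∀ x y, y ∈ V̄(x) ↔ ∃ z, z ∈ x ∧ y ⊆ V̄(z)), and such that ∈ is well-founded. Then for all x, y : M exactly the following trichotomy holds: V̄(x) ∈ V̄(y), or V̄(x) = V̄(y), or V̄(y) ∈ V̄(x). -/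
theorem Vbar_trichotomy
    {M : Type*} (mem : M → M → Prop) (V : M → M)
    (ext : ∀ x y : M, (∀ z, mem z x ↔ mem z y) → x = y)
    (defV : ∀ x y : M, mem y (V x) ↔ ∃ z, mem z x ∧ ∀ w, mem w y → mem w (V z))
    (wf : WellFounded mem) :
    ∀ x y : M, mem (V x) (V y) ∨ V x = V y ∨ mem (V y) (V x) := by
  -- V̄x is transitive
  have trans : ∀ x : M, ∀ y w, mem y (V x) → mem w y → mem w (V x) := by
    intro x
    induction x using wf.induction with
    | _ x ih =>
      intro y w hy hw
      obtain ⟨z, hz, hsub⟩ := (defV x y).mp hy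
      exact (defV x w).mpr ⟨z, hz, fun u hu => ih z hz _ _ (hsub w hw) hu⟩
  have main : ∀ y x : M, mem (V x) (V y) ∨ V x = V y ∨ mem (V y) (V x) := by
    intro y
    induction y using wf.induction with
    | _ y ihy =>
      intro x
      induction x using wf.induction with
      | _ x ihx =>
        by_cases h1 : ∃ z, mem z y ∧ ∀ w, mem w (V x) → mem w (V z)
        · exact Or.inl ((defV y (V x)).mpr h1)
        by_cases h2 : ∃ w, mem w x ∧ ∀ u, mem u (V y) → mem u (V w)
        · exact Or.inr (Or.inr ((defV x (V y)).mpr h2))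
        refine Or.inr (Or.inl (ext _ _ fun u => ⟨fun hu => ?_, fun hu => ?_⟩))
        · obtain ⟨w, hwx, husub⟩ := (defV x u).mp hu
          rcases ihx w hwx with hwy | hwy | hwy
          · obtain ⟨z, hzy, hsub⟩ := (defV y (V w)).mp hwy
            exact (defV y u).mpr ⟨z, hzy, fun t ht => hsub t (husub t ht)⟩
          · exact absurd ⟨w, hwx, fun t ht => hwy ▸ ht⟩ h2
          · exact absurd ⟨w, hwx, fun t ht => trans w _ t hwy ht⟩ h2
        · obtain ⟨z, hzy, husub⟩ := (defV y u).mp hu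
          rcases ihy z hzy x with hxz | hxz | hxz
          · exact absurd ⟨z, hzy, fun t ht => trans z _ t hxz ht⟩ h1
          · exact absurd ⟨z, hzy, fun t ht => hxz ▸ ht⟩ h1
          · obtain ⟨w, hwx, hsub⟩ := (defV x (V z)).mp hxz
            exact (defV x u).mpr ⟨w, hwx, fun t ht => hsub t (husub t ht)⟩
  exact fun x y => main y x
end

section
/- Let M be a type equipped with a binary relation ∈ : M → M → Prop and unary functions V̄, P : M → M satisfying Extensionality (∀ x y, (∀ z, z ∈ x ↔ z ∈ y) → x = y), the Defining Axiom for V̄ (∀ x y, y ∈ V̄(x) ↔ ∃ z, z ∈ x ∧ y ⊆ V̄(z)), the Powerset Axiom (∀ x y, y ∈ P(x) ↔ y ⊆ x), and full Separation (∀ x : M, ∀ Q : M → Prop, ∃ z, ∀ w, w ∈ z ↔ (w ∈ x ∧ Q w)). Then the usual set-existence axioms hold in M: (Pairing) for all x, y there exists z with ∀ w, w ∈ z ↔ (w = x ∨ w = y); (Union) for all x there exists u with ∀ w, w ∈ u ↔ ∃ v, v ∈ x ∧ w ∈ v; (Transitive containment) for all x there exists a transitive t (∀ y, y ∈ t → y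 ⊆ t) with x ∈ t. -/
theorem set_existence_axioms_of_EAset
    {M : Type*} (mem : M → M → Prop) (V : M → M) (P : M → M)
    (ext : ∀ x y : M, (∀ z, mem z x ↔ mem z y) → x = y)
    (defV : ∀ x y : M, mem y (V x) ↔ ∃ z, mem z x ∧ ∀ w, mem w y → mem w (V z))
    (pow : ∀ x y : M, mem y (P x) ↔ ∀ w, mem w y → mem w x)
    (sep : ∀ (x : M) (Q : M → Prop), ∃ z : M, ∀ w, mem w z ↔ (mem w x ∧ Q w)) :
    (∀ x y : M, ∃ z : M, ∀ w, mem w z ↔ (w = x ∨ w = y)) ∧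
    (∀ x : M, ∃ u : M, ∀ w, mem w u ↔ ∃ v, mem v x ∧ mem w v) ∧
    (∀ x : M, ∃ t : M, (∀ y, mem y t → ∀ z, mem z y → mem z t) ∧ mem x t) := by
  classical
  -- Step 1: there is no infinite descending ∈-chain.
  have noDesc : ∀ f : ℕ → M, (∀ n, mem (f (n+1)) (f n)) → False := by
    intro f hf
    set κ : ℕ → Cardinal := fun n => Cardinal.mk {w : M // mem w (V (f n))} with hκ
    have step : ∀ n, κ (n+1) < κ n := by
      intro n
      have hz : ∀ A : Set {w : M // mem w (V (f (n+1)))}, ∃ z : M,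
          ∀ w, mem w z ↔ (mem w (V (f (n+1))) ∧
            ∃ h : mem w (V (f (n+1))), (⟨w, h⟩ : {w : M // mem w (V (f (n+1)))}) ∈ A) :=
        fun A => sep (V (f (n+1))) _
      choose z hzspec using hz
      have hmemz : ∀ A, mem (z A) (V (f n)) := by
        intro A
        exact (defV (f n) (z A)).2 ⟨f (n+1), hf n, fun w hw => ((hzspec A w).1 hw).1⟩
      have hinj : Function.Injective
          (fun A : Set {w : M // mem w (V (f (n+1)))} =>
            (⟨z A, hmemz A⟩ : {w : M // mem w (V (f n))})) := by
        intro A B hAB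
        have hz' : z A = z B := congrArg Subtype.val hAB
        ext ⟨w, h⟩
        have h1 : (⟨w, h⟩ : {w : M // mem w (V (f (n+1)))}) ∈ A ↔ mem w (z A) := by
          rw [hzspec A w]
          exact ⟨fun hA => ⟨h, h, hA⟩, fun ⟨_, h', hA⟩ => hA⟩
        have h2 : (⟨w, h⟩ : {w : M // mem w (V (f (n+1)))}) ∈ B ↔ mem w (z B) := by
          rw [hzspec B w]
          exact ⟨fun hB => ⟨h, h, hB⟩, fun ⟨_, h', hB⟩ => hB⟩
        rw [h1, h2, hz']
      have hle : Cardinal.mk (Set {w : M // mem w (V (f (n+1)))}) ≤ κ n :=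
        Cardinal.mk_le_of_injective hinj
      have hlt : κ (n+1) < Cardinal.mk (Set {w : M // mem w (V (f (n+1)))}) := by
        rw [Cardinal.mk_set]
        exact Cardinal.cantor _
      exact hlt.trans_le hle
    obtain ⟨c, hc, hmin⟩ := Cardinal.lt_wf.has_min (Set.range κ) ⟨κ 0, 0, rfl⟩
    obtain ⟨n, rfl⟩ := hc
    exact hmin (κ (n+1)) ⟨n+1, rfl⟩ (step n)
  -- Step 2: mem is well-founded.
  have wf : WellFounded mem := by
    by_contra hwf
    have hbad : ∃ a : M, ¬ Acc mem a := by
      by_contra hall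
      push_neg at hall
      exact hwf ⟨hall⟩
    have hstep : ∀ a : M, ¬ Acc mem a → ∃ b, mem b a ∧ ¬ Acc mem b := by
      intro a ha
      by_contra hb
      push_neg at hb
      exact ha (Acc.intro a fun b hba => hb b hba)
    obtain ⟨a0, ha0⟩ := hbad
    choose g hg1 hg2 using hstep
    let f : ℕ → {a : M // ¬ Acc mem a} :=
      fun n => Nat.rec (⟨a0, ha0⟩ : {a : M // ¬ Acc mem a})
        (fun _ p => ⟨g p.1 p.2, hg2 p.1 p.2⟩) n
    exact noDesc (fun n => (f n).1) (fun n => hg1 (f n).1 (f n).2)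
  -- Step 3: x ⊆ V x for every x.
  have sub : ∀ x : M, ∀ w, mem w x → mem w (V x) := by
    intro x
    induction x using wf.induction with
    | _ x IH =>
      intro w hw
      exact (defV x w).2 ⟨w, hw, fun u hu => IH w hw u hu⟩
  -- Step 4: V a is supertransitive: members of V a are subsets of V a.
  have ST : ∀ a : M, ∀ y, mem y (V a) → ∀ w, mem w y → mem w (V a) := by
    intro a
    induction a using wf.induction with
    | _ a IH =>
      intro y hy w hw
      obtain ⟨z, hz, hyz⟩ := (defV a y).1 hy
      exact (defV a w).2 ⟨z, hz, fun u hu => IH z hz w (hyz w hw) u hu⟩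
  -- Step 5: comparability: x ⊆ V y or y ⊆ V x.
  have C : ∀ x y : M, (∀ w, mem w x → mem w (V y)) ∨ (∀ w, mem w y → mem w (V x)) := by
    intro x
    induction x using wf.induction with
    | _ x IH =>
      intro y
      by_cases h : ∀ w, mem w x → mem w (V y)
      · exact Or.inl h
      · push_neg at h
        obtain ⟨u, hu, hunot⟩ := h
        refine Or.inr fun z hz => ?_
        rcases IH u hu z with h1 | h2
        · exact absurd ((defV y u).2 ⟨z, hz, h1⟩) hunot
        · exact (defV x z).2 ⟨u, hu, h2⟩
  -- helper for pairing
  have pair : ∀ x y : M, (∀ w, mem w x → mem w (V y)) →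
      ∃ z : M, ∀ w, mem w z ↔ (w = x ∨ w = y) := by
    intro x y h
    obtain ⟨z, hzspec⟩ := sep (P (V y)) (fun w => w = x ∨ w = y)
    have hx : mem x (P (V y)) := (pow (V y) x).2 h
    have hy : mem y (P (V y)) := (pow (V y) y).2 (fun u hu => sub y u hu)
    refine ⟨z, fun w => ⟨fun hw => ((hzspec w).1 hw).2, fun hw => (hzspec w).2 ⟨?_, hw⟩⟩⟩
    rcases hw with rfl | rfl
    · exact hx
    · exact hy
  refine ⟨?_, ?_, ?_⟩
  · -- Pairing
    intro x y
    rcases C x y with h | h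
    · exact pair x y h
    · obtain ⟨z, hz⟩ := pair y x h
      exact ⟨z, fun w => (hz w).trans or_comm⟩
  · -- Union
    intro x
    obtain ⟨u, hu⟩ := sep (V x) (fun w => ∃ v, mem v x ∧ mem w v)
    refine ⟨u, fun w => ⟨fun hw => ((hu w).1 hw).2, ?_⟩⟩
    rintro ⟨v, hv, hwv⟩
    refine (hu w).2 ⟨?_, v, hv, hwv⟩
    exact (defV x w).2 ⟨v, hv, fun s hs => ST v w (sub v w hwv) s hs⟩
  · -- Transitive containment
    intro x
    refine ⟨V (P x), fun y hy z hz => ST (P x) y hy z hz, ?_⟩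
    exact (defV (P x) x).2 ⟨x, (pow x x).2 (fun _ h => h), fun w hw => sub x w hw⟩
end

section
/- Let T : ℕ → ℕ be the superexponential tower (T 0 = 0, T (n+1) = 2^(T n)) and let V_Ack(x) be the least y such that x ≤ y and y = T z − 1 for some z ≥ 1. Then V_Ack satisfies the defining axiom for V̄ under Ackermann membership: for all x, y : ℕ, y ∈_Ack V_Ack(x) if and only if there exists z with z ∈_Ack x and y ⊆_Ack V_Ack(z). -/
/-- The superexponential tower: `T 0 = 0`, `T (n+1) = 2 ^ T n`. -/
def T : ℕ → ℕ
  | 0 => 0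
  | n + 1 => 2 ^ T n

/-- `VAck x` is the least `y` such that `x ≤ y` and `y = T z - 1` for some `z ≥ 1`. -/
noncomputable def VAck (x : ℕ) : ℕ := sInf {y : ℕ | x ≤ y ∧ ∃ z : ℕ, 1 ≤ z ∧ y = T z - 1}

lemma T_strictMono : StrictMono T := by
  apply strictMono_nat_of_lt_succ
  intro n
  exact Nat.lt_two_pow_self (n := T n)

lemma exists_T_pow (x : ℕ) : ∃ w : ℕ, x < 2 ^ T w := by
  refine ⟨x, lt_of_lt_of_le (Nat.lt_two_pow_self (n := x)) ?_⟩
  exact Nat.pow_le_pow_right (by norm_num) T_strictMono.le_apply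

/-- The minimal tower index for `x`. -/
noncomputable def Wk (x : ℕ) : ℕ := Nat.find (exists_T_pow x)

lemma Wk_spec (x : ℕ) : x < 2 ^ T (Wk x) := Nat.find_spec (exists_T_pow x)

lemma Wk_min {x w : ℕ} (h : x < 2 ^ T w) : Wk x ≤ w := Nat.find_le h

lemma VAck_eq (x : ℕ) : VAck x = 2 ^ T (Wk x) - 1 := by
  have hmem : (2 ^ T (Wk x) - 1) ∈ {y : ℕ | x ≤ y ∧ ∃ z : ℕ, 1 ≤ z ∧ y = T z - 1} := by
    constructor
    · have := Wk_spec x; omega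
    · exact ⟨Wk x + 1, by omega, rfl⟩
  have hlb : ∀ y ∈ {y : ℕ | x ≤ y ∧ ∃ z : ℕ, 1 ≤ z ∧ y = T z - 1}, 2 ^ T (Wk x) - 1 ≤ y := by
    rintro y ⟨hxy, z, hz1, rfl⟩
    obtain ⟨w, rfl⟩ : ∃ w, z = w + 1 := ⟨z - 1, by omega⟩
    have hTw : T (w + 1) = 2 ^ T w := rfl
    have hxlt : x < 2 ^ T w := by
      have h2 : 1 ≤ 2 ^ T w := Nat.one_le_two_pow
      omega
    have : Wk x ≤ w := Wk_min hxlt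
    have : T (Wk x) ≤ T w := T_strictMono.monotone this
    have : (2 : ℕ) ^ T (Wk x) ≤ 2 ^ T w := Nat.pow_le_pow_right (by norm_num) this
    omega
  exact (IsLeast.csInf_eq ⟨hmem, hlb⟩)

lemma testBit_VAck (x j : ℕ) : Nat.testBit (VAck x) j = true ↔ j < T (Wk x) := by
  rw [VAck_eq, Nat.testBit_two_pow_sub_one]
  simp

lemma testBit_log (x : ℕ) (hx : x ≠ 0) : Nat.testBit x (Nat.log 2 x) = true := by
  have h1 : 2 ^ Nat.log 2 x ≤ x := Nat.pow_log_le_self 2 hx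
  have h2 : x < 2 ^ (Nat.log 2 x + 1) := Nat.lt_pow_succ_log_self (by norm_num) x
  rw [Nat.testBit_eq_decide_div_mod_eq]
  have hp : (0 : ℕ) < 2 ^ Nat.log 2 x := Nat.pow_pos (by norm_num)
  have hd : x / 2 ^ Nat.log 2 x = 1 := by
    have hle : 1 ≤ x / 2 ^ Nat.log 2 x := (Nat.le_div_iff_mul_le hp).2 (by omega)
    have hlt : x / 2 ^ Nat.log 2 x < 2 := by
      rw [Nat.div_lt_iff_lt_mul hp]
      rw [pow_succ] at h2; omega
    omega
  simp [hd]

lemma lt_two_pow_of_bits {y k : ℕ} (h : ∀ j, Nat.testBit y j = true → j < k) :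
    y < 2 ^ k := by
  by_contra hge
  push_neg at hge
  have hy : y ≠ 0 := by have : (0:ℕ) < 2 ^ k := Nat.pow_pos (by norm_num); omega
  have hbit := testBit_log y hy
  have hlt := h _ hbit
  have : k ≤ Nat.log 2 y := (Nat.le_log_iff_pow_le (by norm_num) hy).2 hge
  omega

theorem VAck_defining_axiom :
    ∀ x y : ℕ, Nat.testBit (VAck x) y = true ↔
      ∃ z : ℕ, Nat.testBit x z = true ∧
        ∀ j, Nat.testBit y j = true → Nat.testBit (VAck z) j = true := by
  intro x y
  rw [testBit_VAck]
  constructor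
  · intro hy
    -- Wk x ≥ 1
    obtain ⟨w, hw⟩ : ∃ w, Wk x = w + 1 := by
      refine ⟨Wk x - 1, ?_⟩
      rcases Nat.eq_zero_or_pos (Wk x) with h0 | h0
      · rw [h0] at hy; simp [T] at hy
      · omega
    have hxge : 2 ^ T w ≤ x := by
      by_contra hlt
      push_neg at hlt
      have := Wk_min hlt
      omega
    have hx0 : x ≠ 0 := by have : (0:ℕ) < 2 ^ T w := Nat.pow_pos (by norm_num); omega
    set z := Nat.log 2 x with hz
    refine ⟨z, testBit_log x hx0, ?_⟩
    -- z ≥ T w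
    have hzge : T w ≤ z := (Nat.le_log_iff_pow_le (by norm_num) hx0).2 hxge
    -- T (Wk z) ≥ T w
    have hTWz : T w ≤ T (Wk z) := by
      rcases Nat.eq_zero_or_pos w with h0 | h0
      · subst h0; simp [T]
      · obtain ⟨v, rfl⟩ : ∃ v, w = v + 1 := ⟨w - 1, by omega⟩
        have hzge' : 2 ^ T v ≤ z := hzge
        have : v + 1 ≤ Wk z := by
          by_contra hc
          push_neg at hc
          have h1 : T (Wk z) ≤ T v := T_strictMono.monotone (by omega)
          have h2 := Wk_spec z
          have : (2:ℕ) ^ T (Wk z) ≤ 2 ^ T v := Nat.pow_le_pow_right (by norm_num) h1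
          omega
        exact T_strictMono.monotone this
    intro j hj
    rw [testBit_VAck]
    have hjy : 2 ^ j ≤ y := Nat.ge_two_pow_of_testBit hj
    have hyT : y < T (w + 1) := by rw [← hw]; exact hy
    have hT1 : T (w + 1) = 2 ^ T w := rfl
    have h2 : (2:ℕ) ^ j < 2 ^ T w := by omega
    have : j < T w := (Nat.pow_lt_pow_iff_right (by norm_num)).1 h2
    omega
  · rintro ⟨z, hxz, hsub⟩
    have hx : 2 ^ z ≤ x := Nat.ge_two_pow_of_testBit hxz
    have hx0 : x ≠ 0 := by have : (0:ℕ) < 2 ^ z := Nat.pow_pos (by norm_num); omega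
    obtain ⟨w, hw⟩ : ∃ w, Wk x = w + 1 := by
      refine ⟨Wk x - 1, ?_⟩
      rcases Nat.eq_zero_or_pos (Wk x) with h0 | h0
      · exfalso
        have := Wk_spec x
        rw [h0] at this
        simp [T] at this
        omega
      · omega
    -- z < T (w+1) = 2 ^ T w
    have hzlt : z < T (Wk x) := by
      have hxlt := Wk_spec x
      have : 2 ^ z < 2 ^ T (Wk x) := by omega
      exact (Nat.pow_lt_pow_iff_right (by norm_num)).1 this
    have hWz : Wk z ≤ w := by
      apply Wk_min
      rw [hw] at hzlt
      exact hzlt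
    -- y < 2 ^ T (Wk z)
    have hybits : ∀ j, Nat.testBit y j = true → j < T (Wk z) := by
      intro j hj
      exact (testBit_VAck z j).1 (hsub j hj)
    have hylt : y < 2 ^ T (Wk z) := lt_two_pow_of_bits hybits
    have : (2:ℕ) ^ T (Wk z) ≤ 2 ^ T w := Nat.pow_le_pow_right (by norm_num)
      (T_strictMono.monotone hWz)
    have : y < 2 ^ T w := by omega
    rw [hw]
    exact this
end
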